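/- Let L ≥ 2 and t ≥ 1 be integers, and take gate parameters a = c = g = 1 and ε₁ = ε₂ = b = d = e = f = 0 in the brickwork transfer matrix construction (so each gate is the SWAP permutation of its two wires). Then trace(𝕋^t) = 4^{gcd(t, L)}. -/

import Mathlib

open Matrix BigOperators

/-- The reduced two-site gate `w` with the 9 parameters
`ε₁, ε₂, a, b, c, d, e, f, g`.  The first argument is the output pair,
the second the input pair (both in `{0,1} × {0,1}`), and all remaining
entries vanish. -/
noncomputable def gateW (e1 e2 a b c d e f g : ℝ)
    (r s : Fin 2 × Fin 2) : ℝ :=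
  if r = (0, 0) ∧ s = (0, 0) then 1
  else if r = (0, 1) ∧ s = (0, 1) then e1
  else if r = (0, 1) ∧ s = (1, 0) then a
  else if r = (0, 1) ∧ s = (1, 1) then b
  else if r = (1, 0) ∧ s = (0, 1) then c
  else if r = (1, 0) ∧ s = (1, 0) then e2
  else if r = (1, 0) ∧ s = (1, 1) then d
  else if r = (1, 1) ∧ s = (0, 1) then e
  else if r = (1, 1) ∧ s = (1, 0) then f
  else if r = (1, 1) ∧ s = (1, 1) then g
  else 0

/-- Even half-step of the brickwork circuit: gates on pairs `(2j, 2j+1)`. -/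
noncomputable def stepE (L : ℕ) (w : Fin 2 × Fin 2 → Fin 2 × Fin 2 → ℝ) :
    Matrix (ZMod (2 * L) → Fin 2) (ZMod (2 * L) → Fin 2) ℝ :=
  fun s' s => ∏ j ∈ Finset.range L,
    w (s' ((2 * j : ℕ) : ZMod (2 * L)), s' ((2 * j + 1 : ℕ) : ZMod (2 * L)))
      (s ((2 * j : ℕ) : ZMod (2 * L)), s ((2 * j + 1 : ℕ) : ZMod (2 * L)))

/-- Odd half-step of the brickwork circuit: gates on pairs `(2j+1, 2j+2)`. -/
noncomputable def stepO (L : ℕ) (w : Fin 2 × Fin 2 → Fin 2 × Fin 2 → ℝ) :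
    Matrix (ZMod (2 * L) → Fin 2) (ZMod (2 * L) → Fin 2) ℝ :=
  fun s' s => ∏ j ∈ Finset.range L,
    w (s' ((2 * j + 1 : ℕ) : ZMod (2 * L)), s' ((2 * j + 2 : ℕ) : ZMod (2 * L)))
      (s ((2 * j + 1 : ℕ) : ZMod (2 * L)), s ((2 * j + 2 : ℕ) : ZMod (2 * L)))

/-- The brickwork transfer matrix `𝕋 = O · E`. -/
noncomputable def transferT (L : ℕ) [NeZero (2 * L)]
    (w : Fin 2 × Fin 2 → Fin 2 × Fin 2 → ℝ) :
    Matrix (ZMod (2 * L) → Fin 2) (ZMod (2 * L) → Fin 2) ℝ :=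
  stepO L w * stepE L w

lemma bw_gateW_swap (r s : Fin 2 × Fin 2) :
    gateW 0 0 1 0 1 0 0 0 1 r s = if r = (s.2, s.1) then 1 else 0 := by
  rcases r with ⟨r1, r2⟩
  rcases s with ⟨s1, s2⟩
  fin_cases r1 <;> fin_cases r2 <;> fin_cases s1 <;> fin_cases s2 <;>
    simp [gateW, Prod.ext_iff, Fin.ext_iff]

lemma bw_prod_indicator {ι : Type*} (S : Finset ι) (P : ι → Prop) [DecidablePred P] :
    (∏ j ∈ S, if P j then (1:ℝ) else 0) = if (∀ j ∈ S, P j) then 1 else 0 := by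
  by_cases h : ∀ j ∈ S, P j
  · rw [if_pos h]
    exact Finset.prod_eq_one fun j hj => by rw [if_pos (h j hj)]
  · rw [if_neg h]
    push_neg at h
    obtain ⟨j, hj, hP⟩ := h
    exact Finset.prod_eq_zero hj (by rw [if_neg hP])

def bwEp (L : ℕ) : ZMod (2 * L) →+* ZMod 2 := ZMod.castHom ⟨L, rfl⟩ (ZMod 2)

def bwPE (L : ℕ) (i : ZMod (2 * L)) : ZMod (2 * L) :=
  if bwEp L i = 0 then i + 1 else i - 1

def bwPO (L : ℕ) (i : ZMod (2 * L)) : ZMod (2 * L) :=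
  if bwEp L i = 0 then i - 1 else i + 1

def bwMk (L : ℕ) [NeZero (2 * L)] (f : ZMod (2 * L) → ZMod (2 * L)) :
    Matrix (ZMod (2 * L) → Fin 2) (ZMod (2 * L) → Fin 2) ℝ :=
  fun s' s => if s' = s ∘ f then 1 else 0

lemma bw_val_eq {n : ℕ} [NeZero n] (i : ZMod n) : ((i.val : ℕ) : ZMod n) = i := by
  rw [ZMod.natCast_val, ZMod.cast_id]

lemma bw_even_cast (j : ℕ) : ((2 * j : ℕ) : ZMod 2) = 0 :=
  (ZMod.natCast_eq_zero_iff _ 2).mpr ⟨j, rfl⟩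

lemma bw_odd_cast (j : ℕ) : ((2 * j + 1 : ℕ) : ZMod 2) = 1 := by
  have h : (2 * j + 1) % 2 = 1 % 2 := by omega
  rw [← ZMod.natCast_mod, h, ZMod.natCast_mod]
  norm_num

lemma bwEp_natCast (L k : ℕ) : bwEp L ((k : ℕ) : ZMod (2 * L)) = (k : ZMod 2) :=
  map_natCast (bwEp L) k

lemma bwEp_val (L : ℕ) [NeZero (2*L)] (i : ZMod (2*L)) :
    bwEp L i = ((i.val : ℕ) : ZMod 2) := by
  conv_lhs => rw [← bw_val_eq i]
  rw [bwEp_natCast]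

lemma bw_stepE_eq (L : ℕ) [NeZero (2*L)] :
    stepE L (gateW 0 0 1 0 1 0 0 0 1) = bwMk L (bwPE L) := by
  ext s' s
  simp only [stepE, bw_gateW_swap, bwMk]
  rw [bw_prod_indicator]
  congr 1
  simp only [eq_iff_iff]
  constructor
  · intro h
    funext i
    have hkv : i.val < 2 * L := ZMod.val_lt i
    set k := i.val with hk
    have hi : ((k : ℕ) : ZMod (2*L)) = i := bw_val_eq i
    rcases Nat.mod_two_eq_zero_or_one k with hpar | hpar
    · set j := k / 2 with hj
      have hjl : j < L := by omega
      have hkj : k = 2 * j := by omega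
      have h1 := h j (Finset.mem_range.mpr hjl)
      have hij : ((2 * j : ℕ) : ZMod (2*L)) = i := by rw [← hkj]; exact hi
      have hep : bwEp L i = 0 := by rw [bwEp_val, ← hk, hkj]; exact bw_even_cast j
      have hpe : bwPE L i = ((2 * j + 1 : ℕ) : ZMod (2*L)) := by
        rw [bwPE, if_pos hep, ← hij]; push_cast; ring
      have := congrArg Prod.fst h1
      simp only at this
      rw [hij] at this
      simpa [Function.comp, hpe] using this
    · set j := k / 2 with hj
      have hjl : j < L := by omega
      have hkj : k = 2 * j + 1 := by omega
      have h1 := h j (Finset.mem_range.mpr hjl)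
      have hij : ((2 * j + 1 : ℕ) : ZMod (2*L)) = i := by rw [← hkj]; exact hi
      have hep : bwEp L i ≠ 0 := by
        rw [bwEp_val, ← hk, hkj, bw_odd_cast]; decide
      have hpe : bwPE L i = ((2 * j : ℕ) : ZMod (2*L)) := by
        rw [bwPE, if_neg hep, ← hij]; push_cast; ring
      have := congrArg Prod.snd h1
      simp only at this
      rw [hij] at this
      simpa [Function.comp, hpe] using this
  · intro h j _
    have hepe : bwEp L ((2*j:ℕ) : ZMod (2*L)) = 0 := by rw [bwEp_natCast]; exact bw_even_cast j
    have hepo : bwEp L ((2*j+1:ℕ) : ZMod (2*L)) ≠ 0 := by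
      rw [bwEp_natCast, bw_odd_cast]; decide
    have h1 := congrFun h ((2*j:ℕ) : ZMod (2*L))
    have h2 := congrFun h ((2*j+1:ℕ) : ZMod (2*L))
    simp only [Function.comp, bwPE, if_pos hepe, if_neg hepo] at h1 h2
    refine Prod.ext ?_ ?_
    · simpa using h1.trans (by push_cast; ring_nf)
    · refine h2.trans ?_
      congr 1
      push_cast
      ring

lemma bw_stepO_eq (L : ℕ) [NeZero (2*L)] :
    stepO L (gateW 0 0 1 0 1 0 0 0 1) = bwMk L (bwPO L) := by
  have hL0 : 0 < L := by
    rcases Nat.eq_zero_or_pos L with h | h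
    · exfalso; exact (NeZero.ne (2*L)) (by omega)
    · exact h
  ext s' s
  simp only [stepO, bw_gateW_swap, bwMk]
  rw [bw_prod_indicator]
  congr 1
  simp only [eq_iff_iff]
  constructor
  · intro h
    funext i
    have hkv : i.val < 2 * L := ZMod.val_lt i
    set k := i.val with hk
    have hi : ((k : ℕ) : ZMod (2*L)) = i := bw_val_eq i
    rcases Nat.mod_two_eq_zero_or_one k with hpar | hpar
    · -- even : use factor j-1 (or L-1 when j = 0)
      set j := k / 2 with hj
      have hkj : k = 2 * j := by omega
      have hep : bwEp L i = 0 := by rw [bwEp_val, ← hk, hkj]; exact bw_even_cast j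
      have hpo : bwPO L i = i - 1 := by rw [bwPO, if_pos hep]
      rcases Nat.eq_zero_or_pos j with hj0 | hj0
      · have hi0 : i = 0 := by rw [← hi, hkj, hj0]; simp
        have h1 := congrArg Prod.snd (h (L-1) (Finset.mem_range.mpr (by omega)))
        simp only at h1
        have e1 : ((2*(L-1)+2 : ℕ) : ZMod (2*L)) = i := by
          rw [show 2*(L-1)+2 = 2*L from by omega, ZMod.natCast_self, hi0]
        have e2 : ((2*(L-1)+1 : ℕ) : ZMod (2*L)) = i - 1 := by
          have : ((2*(L-1)+1 : ℕ) : ZMod (2*L)) + 1 = ((2*L : ℕ) : ZMod (2*L)) := by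
            rw [show (2*L : ℕ) = (2*(L-1)+1) + 1 from by omega]; push_cast; ring
          rw [ZMod.natCast_self] at this
          rw [hi0]
          linear_combination this
        rw [e1, e2] at h1
        simpa [Function.comp, hpo] using h1
      · have h1 := congrArg Prod.snd (h (j-1) (Finset.mem_range.mpr (by omega)))
        simp only at h1
        have e1 : ((2*(j-1)+2 : ℕ) : ZMod (2*L)) = i := by
          rw [show 2*(j-1)+2 = 2*j from by omega, ← hkj]; exact hi
        have e2 : ((2*(j-1)+1 : ℕ) : ZMod (2*L)) = i - 1 := by
          have : ((2*(j-1)+1 : ℕ) : ZMod (2*L)) + 1 = ((2*j : ℕ) : ZMod (2*L)) := by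
            rw [show (2*j : ℕ) = (2*(j-1)+1) + 1 from by omega]; push_cast; ring
          rw [hkj] at hi
          linear_combination this.trans hi
        rw [e1, e2] at h1
        simpa [Function.comp, hpo] using h1
    · -- odd : use factor j
      set j := k / 2 with hj
      have hjl : j < L := by omega
      have hkj : k = 2 * j + 1 := by omega
      have hij : ((2 * j + 1 : ℕ) : ZMod (2*L)) = i := by rw [← hkj]; exact hi
      have hep : bwEp L i ≠ 0 := by
        rw [bwEp_val, ← hk, hkj, bw_odd_cast]; decide
      have hpo : bwPO L i = ((2 * j + 2 : ℕ) : ZMod (2*L)) := by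
        rw [bwPO, if_neg hep, ← hij]; push_cast; ring
      have h1 := congrArg Prod.fst (h j (Finset.mem_range.mpr hjl))
      simp only at h1
      rw [hij] at h1
      simpa [Function.comp, hpo] using h1
  · intro h j _
    have hepo : bwEp L ((2*j+1:ℕ) : ZMod (2*L)) ≠ 0 := by
      rw [bwEp_natCast, bw_odd_cast]; decide
    have hepe : bwEp L ((2*j+2:ℕ) : ZMod (2*L)) = 0 := by
      rw [bwEp_natCast, show (2*j+2) = 2*(j+1) from by ring]; exact bw_even_cast (j+1)
    have h1 := congrFun h ((2*j+1:ℕ) : ZMod (2*L))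
    have h2 := congrFun h ((2*j+2:ℕ) : ZMod (2*L))
    simp only [Function.comp, bwPO, if_neg hepo, if_pos hepe] at h1 h2
    refine Prod.ext ?_ ?_
    · refine h1.trans ?_
      congr 1
      push_cast
      ring
    · refine h2.trans ?_
      congr 1
      push_cast
      ring

def bwRho (L t : ℕ) (i : ZMod (2 * L)) : ZMod (2 * L) :=
  if bwEp L i = 0 then i - ((2*t : ℕ) : ZMod (2*L)) else i + ((2*t : ℕ) : ZMod (2*L))

lemma bw_zmod2 (x : ZMod 2) (h : x ≠ 0) : x = 1 := by revert x; decide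

lemma bwEp_two_t (L t : ℕ) : bwEp L ((2*t : ℕ) : ZMod (2*L)) = 0 := by
  rw [bwEp_natCast]; exact bw_even_cast t

lemma bwEp_two (L : ℕ) : bwEp L 2 = 0 := by
  have h := bwEp_natCast L 2
  have h2 : ((2:ℕ) : ZMod 2) = 0 := by decide
  simpa using h.trans h2

lemma bw_comp (L : ℕ) (i : ZMod (2*L)) :
    (bwPE L ∘ bwPO L) i = if bwEp L i = 0 then i - 2 else i + 2 := by
  simp only [Function.comp, bwPO, bwPE]
  by_cases h : bwEp L i = 0
  · simp only [if_pos h]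
    have : bwEp L (i - 1) ≠ 0 := by
      rw [map_sub, h, (bwEp L).map_one]; decide
    simp only [if_neg this]
    ring
  · simp only [if_neg h]
    have : bwEp L (i + 1) = 0 := by
      rw [map_add, bw_zmod2 _ h, (bwEp L).map_one]; decide
    simp only [if_pos this]
    ring

lemma bw_iterate (L t : ℕ) : (bwPE L ∘ bwPO L)^[t] = bwRho L t := by
  induction t with
  | zero => funext i; simp [bwRho]
  | succ t ih =>
      funext i
      rw [Function.iterate_succ', Function.comp_apply, ih, bw_comp]
      have hep : bwEp L (bwRho L t i) = bwEp L i := by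
        unfold bwRho
        by_cases h : bwEp L i = 0 <;>
          simp [h, map_sub, map_add, bwEp_two_t L t, bwEp_two L]
      rw [hep]
      unfold bwRho
      by_cases h : bwEp L i = 0
      · rw [if_pos h, if_pos h, if_pos h]
        push_cast
        ring
      · rw [if_neg h, if_neg h, if_neg h]
        push_cast
        ring

lemma bw_periodic_card (N t : ℕ) [NeZero N] (ht : 0 < t) :
    Fintype.card {u : ZMod N → Fin 2 // ∀ j, u (j + (t : ZMod N)) = u j}
      = 2 ^ Nat.gcd t N := by
  classical
  set g := Nat.gcd t N with hgdef
  have hg0 : 0 < g := Nat.gcd_pos_of_pos_left N ht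
  haveI : NeZero g := ⟨hg0.ne'⟩
  have hgN : g ∣ N := Nat.gcd_dvd_right t N
  have hgt : g ∣ t := Nat.gcd_dvd_left t N
  let φ : ZMod N →+* ZMod g := ZMod.castHom hgN (ZMod g)
  have hφnat : ∀ m : ℕ, φ ((m : ℕ) : ZMod N) = (m : ZMod g) := fun m => map_natCast φ m
  have e : (ZMod g → Fin 2) ≃ {u : ZMod N → Fin 2 // ∀ j, u (j + (t : ZMod N)) = u j} := by
    refine
      { toFun := fun u0 => ⟨fun j => u0 (φ j), ?_⟩
        invFun := fun u => fun k => u.1 ((k.val : ℕ) : ZMod N)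
        left_inv := ?_
        right_inv := ?_ }
    · intro j
      have h0 : φ ((t : ℕ) : ZMod N) = 0 := by
        rw [hφnat]
        exact (ZMod.natCast_eq_zero_iff t g).mpr hgt
      simp [map_add, h0]
    · intro u0
      funext k
      show u0 (φ ((k.val : ℕ) : ZMod N)) = u0 k
      rw [hφnat, bw_val_eq]
    · rintro ⟨u, hu⟩
      refine Subtype.ext ?_
      funext j
      show u (((φ j).val : ℕ) : ZMod N) = u j
      set H : AddSubgroup (ZMod N) :=
        { carrier := {c | ∀ x, u (x + c) = u x}
          zero_mem' := by intro x; simp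
          add_mem' := by
            intro c d hc hd x
            rw [← add_assoc, hd, hc]
          neg_mem' := by
            intro c hc x
            have h2 := hc (x + -c)
            rw [add_assoc, neg_add_cancel, add_zero] at h2
            exact h2.symm } with hH
      have htH : (t : ZMod N) ∈ H := hu
      have hgH : ((g : ℕ) : ZMod N) ∈ H := by
        have hb := Nat.gcd_eq_gcd_ab t N
        have h3 : ((g : ℕ) : ZMod N) = (Nat.gcdA t N : ZMod N) * (t : ZMod N) := by
          have h4 := congrArg (fun z : ℤ => (z : ZMod N)) hb
          push_cast at h4
          rw [ZMod.natCast_self] at h4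
          rw [h4]
          ring
        rw [h3, ← zsmul_eq_mul]
        exact H.zsmul_mem htH _
      have hmul : ∀ m : ℕ, ((m * g : ℕ) : ZMod N) ∈ H := by
        intro m
        have h5 : ((m * g : ℕ) : ZMod N) = m • ((g : ℕ) : ZMod N) := by
          rw [nsmul_eq_mul]; push_cast; ring
        rw [h5]
        exact H.nsmul_mem hgH m
      have hφval : (φ j).val = j.val % g := by
        have h1 : φ j = ((j.val : ℕ) : ZMod g) := by
          conv_lhs => rw [← bw_val_eq j]
          exact hφnat j.val
        rw [h1, ZMod.val_natCast]
      have hsplit : j = (((φ j).val : ℕ) : ZMod N) + (((j.val / g) * g : ℕ) : ZMod N) := by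
        conv_lhs => rw [← bw_val_eq j]
        rw [hφval, ← Nat.cast_add]
        congr 1
        exact (Nat.mod_add_div' j.val g).symm
      conv_rhs => rw [hsplit]
      exact (hmul (j.val / g) _).symm
  rw [← Fintype.card_congr e, Fintype.card_fun, ZMod.card, Fintype.card_fin]

def bwIota (L : ℕ) : ZMod L →+ ZMod (2*L) :=
  ZMod.lift L ⟨zmultiplesHom _ (2 : ZMod (2*L)), by
    show (L : ℤ) • (2 : ZMod (2*L)) = 0
    rw [zsmul_eq_mul]
    push_cast
    have h := ZMod.natCast_self (2*L)
    push_cast at h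
    linear_combination h⟩

lemma bwIota_nat (L m : ℕ) : bwIota L ((m : ℕ) : ZMod L) = ((2*m : ℕ) : ZMod (2*L)) := by
  have h : ((m : ℕ) : ZMod L) = ((m : ℤ) : ZMod L) := by push_cast; rfl
  rw [h]
  show ZMod.lift L _ ((m : ℤ) : ZMod L) = _
  rw [ZMod.lift_coe]
  show (m : ℤ) • (2 : ZMod (2*L)) = _
  rw [zsmul_eq_mul]
  push_cast
  ring

lemma bwIota_val (L : ℕ) [NeZero L] (j : ZMod L) :
    bwIota L j = ((2 * j.val : ℕ) : ZMod (2*L)) := by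
  conv_lhs => rw [← bw_val_eq j]
  exact bwIota_nat L j.val

lemma bwEp_iota (L : ℕ) [NeZero L] (j : ZMod L) : bwEp L (bwIota L j) = 0 := by
  rw [bwIota_val, bwEp_natCast]
  exact bw_even_cast _

def bwDelta (L : ℕ) [NeZero (2*L)] (i : ZMod (2*L)) : ZMod L := ((i.val / 2 : ℕ) : ZMod L)

lemma bwDelta_iota (L : ℕ) [NeZero (2*L)] [NeZero L] (j : ZMod L) :
    bwDelta L (bwIota L j) = j := by
  rw [bwIota_val, bwDelta, ZMod.val_natCast_of_lt (by have := ZMod.val_lt j; omega)]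
  rw [Nat.mul_div_cancel_left _ (by norm_num)]
  exact bw_val_eq j

lemma bwIota_delta (L : ℕ) [NeZero (2*L)] [NeZero L] (i : ZMod (2*L)) (h : bwEp L i = 0) :
    bwIota L (bwDelta L i) = i := by
  rw [bwDelta, bwIota_nat]
  have hdvd : 2 ∣ i.val := by
    rw [bwEp_val] at h
    exact (ZMod.natCast_eq_zero_iff i.val 2).mp h
  rw [Nat.mul_div_cancel' hdvd]
  exact bw_val_eq i

lemma bw_one_ne_zero : (1 : ZMod 2) ≠ 0 := by decide

lemma bw_fixed_card (L t : ℕ) [NeZero (2*L)] (ht : 0 < t) :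
    Fintype.card {s : ZMod (2*L) → Fin 2 // s = s ∘ bwRho L t} = 4 ^ Nat.gcd t L := by
  classical
  haveI : NeZero L := ⟨by
    intro h
    exact (NeZero.ne (2*L)) (by omega)⟩
  set t' : ZMod L := ((t : ℕ) : ZMod L) with ht'
  have hiota_t : bwIota L t' = ((2*t : ℕ) : ZMod (2*L)) := bwIota_nat L t
  -- the map to the pair of periodic configurations
  let F : {s : ZMod (2*L) → Fin 2 // s = s ∘ bwRho L t} →
      ({u : ZMod L → Fin 2 // ∀ j, u (j + t') = u j} ×
       {v : ZMod L → Fin 2 // ∀ j, v (j + t') = v j}) := fun s =>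
    (⟨fun j => s.1 (bwIota L j), by
        intro j
        have h1 := congrFun s.2 (bwIota L (j + t'))
        rw [Function.comp_apply, bwRho, if_pos (bwEp_iota L _), map_add, hiota_t,
          add_sub_cancel_right] at h1
        show s.1 (bwIota L (j + t')) = s.1 (bwIota L j)
        rw [map_add, hiota_t]
        exact h1⟩,
     ⟨fun j => s.1 (bwIota L j + 1), by
        intro j
        have hep : bwEp L (bwIota L j + 1) ≠ 0 := by
          rw [map_add, bwEp_iota, (bwEp L).map_one, zero_add]
          exact bw_one_ne_zero
        have h1 := congrFun s.2 (bwIota L j + 1)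
        rw [Function.comp_apply, bwRho, if_neg hep] at h1
        have h2 : bwIota L j + 1 + ((2*t : ℕ) : ZMod (2*L)) = bwIota L (j + t') + 1 := by
          rw [map_add, hiota_t]
          ring
        rw [h2] at h1
        exact h1.symm⟩)
  have hFinj : Function.Injective F := by
    rintro s1 s2 h
    have hu := congrFun (Subtype.ext_iff.mp (congrArg Prod.fst h))
    have hv := congrFun (Subtype.ext_iff.mp (congrArg Prod.snd h))
    refine Subtype.ext (funext fun i => ?_)
    by_cases hep : bwEp L i = 0
    · have h1 := hu (bwDelta L i)
      simpa [F, bwIota_delta L i hep] using h1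
    · have hep1 : bwEp L (i - 1) = 0 := by
        rw [map_sub, bw_zmod2 _ hep, (bwEp L).map_one, sub_self]
      have h1 := hv (bwDelta L (i - 1))
      simpa [F, bwIota_delta L (i-1) hep1, sub_add_cancel] using h1
  have hFsurj : Function.Surjective F := by
    rintro ⟨⟨u, hu⟩, ⟨v, hv⟩⟩
    set s : ZMod (2*L) → Fin 2 := fun i =>
      if bwEp L i = 0 then u (bwDelta L i) else v (bwDelta L (i-1)) with hsdef
    have hs : s = s ∘ bwRho L t := by
      funext i
      rw [Function.comp_apply]
      by_cases hep : bwEp L i = 0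
      · have hepr : bwEp L (bwRho L t i) = 0 := by
          rw [bwRho, if_pos hep, map_sub, hep, bwEp_two_t, sub_zero]
        have hdelta : bwDelta L (bwRho L t i) = bwDelta L i - t' := by
          rw [bwRho, if_pos hep]
          have : i - ((2*t : ℕ) : ZMod (2*L)) = bwIota L (bwDelta L i - t') := by
            rw [map_sub, hiota_t, bwIota_delta L i hep]
          rw [this, bwDelta_iota]
        rw [hsdef]
        simp only [if_pos hep, if_pos hepr, hdelta]
        have h6 := hu (bwDelta L i - t')
        rw [sub_add_cancel] at h6
        exact h6
      · have hepr : bwEp L (bwRho L t i) ≠ 0 := by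
          rw [bwRho, if_neg hep, map_add, bwEp_two_t, add_zero]
          exact hep
        have hep1 : bwEp L (i - 1) = 0 := by
          rw [map_sub, bw_zmod2 _ hep, (bwEp L).map_one, sub_self]
        have hdelta : bwDelta L (bwRho L t i - 1) = bwDelta L (i-1) + t' := by
          rw [bwRho, if_neg hep]
          have : i + ((2*t : ℕ) : ZMod (2*L)) - 1 = bwIota L (bwDelta L (i-1) + t') := by
            rw [map_add, hiota_t, bwIota_delta L (i-1) hep1]
            ring
          rw [this, bwDelta_iota]
        rw [hsdef]
        simp only [if_neg hep, if_neg hepr, hdelta]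
        exact (hv (bwDelta L (i-1))).symm
    refine ⟨⟨s, hs⟩, ?_⟩
    refine Prod.ext (Subtype.ext (funext fun j => ?_)) (Subtype.ext (funext fun j => ?_))
    · show s (bwIota L j) = u j
      rw [hsdef]
      simp only [if_pos (bwEp_iota L j), bwDelta_iota]
    · show s (bwIota L j + 1) = v j
      have hep : bwEp L (bwIota L j + 1) ≠ 0 := by
        rw [map_add, bwEp_iota, (bwEp L).map_one, zero_add]
        exact bw_one_ne_zero
      rw [hsdef]
      simp only [if_neg hep, add_sub_cancel_right, bwDelta_iota]
  have hcard := Fintype.card_of_bijective ⟨hFinj, hFsurj⟩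
  rw [hcard, Fintype.card_prod, bw_periodic_card L t ht, ← mul_pow]
  norm_num

lemma bwMk_mul (L : ℕ) [NeZero (2*L)] (f g : ZMod (2 * L) → ZMod (2 * L)) :
    bwMk L f * bwMk L g = bwMk L (g ∘ f) := by
  ext s' s
  simp only [Matrix.mul_apply, bwMk]
  rw [Finset.sum_eq_single (s ∘ g)]
  · simp [Function.comp_assoc]
  · intro u _ hu
    rw [if_neg hu, mul_zero]
  · intro h
    exact absurd (Finset.mem_univ _) h

lemma bwMk_one (L : ℕ) [NeZero (2*L)] : bwMk L id = 1 := by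
  ext s' s
  simp [bwMk, Matrix.one_apply]

lemma bwMk_pow (L : ℕ) [NeZero (2*L)] (f : ZMod (2 * L) → ZMod (2 * L)) (n : ℕ) :
    bwMk L f ^ n = bwMk L f^[n] := by
  induction n with
  | zero => simpa using (bwMk_one L).symm
  | succ n ih =>
      rw [pow_succ, ih, bwMk_mul, Function.iterate_succ', Function.comp_def]

lemma bwMk_trace (L : ℕ) [NeZero (2*L)] (f : ZMod (2 * L) → ZMod (2 * L)) :
    Matrix.trace (bwMk L f) = (Fintype.card {s : ZMod (2*L) → Fin 2 // s = s ∘ f} : ℝ) := by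
  simp only [Matrix.trace, Matrix.diag, bwMk]
  rw [Finset.sum_boole, Fintype.card_subtype]

/-- for the SWAP gate (`a = c = g = 1`, all other parameters `0`),
`trace(𝕋^t) = 4^{gcd(t, L)}`. -/
theorem stmt18 (L t : ℕ) [NeZero (2 * L)] (hL : 2 ≤ L) (ht : 1 ≤ t) :
    Matrix.trace (transferT L (gateW 0 0 1 0 1 0 0 0 1) ^ t) =
      (4 : ℝ) ^ Nat.gcd t L := by
  rw [transferT, bw_stepO_eq, bw_stepE_eq, bwMk_mul, bwMk_pow, bw_iterate, bwMk_trace,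
    bw_fixed_card L t ht]
  push_cast
  ring
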